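/- arXiv:1701.01264 — 6 statements merged into one kernel-verified Lean document; each statement's English description precedes it below -/
import Mathlib

section
/- For any nonempty compact convex set X ⊂ ℝ² and any θ, β ∈ [0, 2π], the Feret diameter satisfies H_X(θ + β) ≤ H_X(θ) + 2|sin(β/2)| · H_X(θ + (β + π)/2). -/
open Real Pointwise MeasureTheory

/-- Points of the Euclidean plane. -/
abbrev Pt := EuclideanSpace ℝ (Fin 2)

noncomputable def mk2 (a b : ℝ) : Pt := (WithLp.equiv 2 (Fin 2 → ℝ)).symm ![a, b]

/-- Support function `f_X(x) = sup_{s ∈ X} ⟨x, s⟩`. -/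
noncomputable def fS (X : Set Pt) (x : Pt) : ℝ :=
  sSup ((fun s => (inner ℝ x s : ℝ)) '' X)

/-- Direction vector `(-sin θ, cos θ)`. -/
noncomputable def dir (θ : ℝ) : Pt := mk2 (-Real.sin θ) (Real.cos θ)

/-- Support function in direction θ. -/
noncomputable def hF (X : Set Pt) (θ : ℝ) : ℝ := fS X (dir θ)

/-- The Feret diameter `H_X(θ) = h_X(θ) + h_{-X}(θ)`. -/
noncomputable def feret (X : Set Pt) (θ : ℝ) : ℝ := hF X θ + hF (-X) θ

/-- The segment with endpoints `±½(cos θ, sin θ)`. -/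
noncomputable def seg (θ : ℝ) : Set Pt :=
  segment ℝ (-mk2 (Real.cos θ / 2) (Real.sin θ / 2)) (mk2 (Real.cos θ / 2) (Real.sin θ / 2))

lemma img_bdd (X : Set Pt) (hcomp : IsCompact X) (x : Pt) :
    BddAbove ((fun s => (inner ℝ x s : ℝ)) '' X) :=
  (hcomp.image (continuous_const.inner continuous_id)).bddAbove

lemma le_fS {X : Set Pt} (hcomp : IsCompact X) (x : Pt) {s : Pt} (hs : s ∈ X) :
    (inner ℝ x s : ℝ) ≤ fS X x :=
  le_csSup (img_bdd X hcomp x) ⟨s, hs, rfl⟩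

lemma fS_add_le {X : Set Pt} (hne : X.Nonempty) (hcomp : IsCompact X) (x y : Pt) :
    fS X (x + y) ≤ fS X x + fS X y := by
  apply csSup_le (hne.image _)
  rintro _ ⟨s, hs, rfl⟩
  simp only [inner_add_left]
  exact add_le_add (le_fS hcomp x hs) (le_fS hcomp y hs)

lemma fS_smul_le {X : Set Pt} (hne : X.Nonempty) (hcomp : IsCompact X)
    {c : ℝ} (hc : 0 ≤ c) (x : Pt) : fS X (c • x) ≤ c * fS X x := by
  apply csSup_le (hne.image _)
  rintro _ ⟨s, hs, rfl⟩
  simp only [real_inner_smul_left]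
  exact mul_le_mul_of_nonneg_left (le_fS hcomp x hs) hc

lemma fS_neg_le {X : Set Pt} (hne : X.Nonempty) (hcomp : IsCompact X) (x : Pt) :
    fS X (-x) ≤ fS (-X) x := by
  apply csSup_le (hne.image _)
  rintro _ ⟨s, hs, rfl⟩
  have : (inner ℝ (-x) s : ℝ) = inner ℝ x (-s) := by
    simp [inner_neg_left, inner_neg_right]
  show (inner ℝ (-x) s : ℝ) ≤ fS (-X) x
  rw [this]
  exact le_fS hcomp.neg x (Set.neg_mem_neg.mpr hs)

lemma dir_key (θ β : ℝ) :
    dir (θ + β) = dir θ + (2 * Real.sin (β / 2)) • dir (θ + (β + π) / 2) := by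
  have h1 : θ + β = (θ + β / 2) + β / 2 := by ring
  have h2 : θ = (θ + β / 2) - β / 2 := by ring
  have h3 : θ + (β + π) / 2 = (θ + β / 2) + π / 2 := by ring
  rw [h1, h3]
  nth_rewrite 2 [h2]
  unfold dir mk2
  apply PiLp.ext
  intro i
  fin_cases i
  · simp [Real.sin_add, Real.cos_add, Real.sin_sub, Real.cos_sub]
    ring_nf
    linear_combination (-Real.sin θ) * Real.sin_sq_add_cos_sq (β * (1/2))
  · simp [Real.sin_add, Real.cos_add, Real.sin_sub, Real.cos_sub]
    ring_nf
    linear_combination (Real.cos θ) * Real.sin_sq_add_cos_sq (β * (1/2))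

theorem feret_angle_inequality (X : Set Pt)
    (hne : X.Nonempty) (hcomp : IsCompact X) (hconv : Convex ℝ X)
    (θ β : ℝ) (hθ : θ ∈ Set.Icc 0 (2 * π)) (hβ : β ∈ Set.Icc 0 (2 * π)) :
    feret X (θ + β) ≤
      feret X θ + 2 * |Real.sin (β / 2)| * feret X (θ + (β + π) / 2) := by
  set c := 2 * Real.sin (β / 2) with hc
  set φ := θ + (β + π) / 2 with hφ
  have hXne : (-X).Nonempty := hne.neg
  have hXc : IsCompact (-X) := hcomp.neg
  have hkey : dir (θ + β) = dir θ + c • dir φ := dir_key θ β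
  have habs : 2 * |Real.sin (β / 2)| = |c| := by
    rw [hc, abs_mul]; simp
  have h1 : fS X (dir (θ + β)) ≤ fS X (dir θ) + fS X (c • dir φ) := by
    rw [hkey]; exact fS_add_le hne hcomp _ _
  have h2 : fS (-X) (dir (θ + β)) ≤ fS (-X) (dir θ) + fS (-X) (c • dir φ) := by
    rw [hkey]; exact fS_add_le hXne hXc _ _
  have hsum : fS X (c • dir φ) + fS (-X) (c • dir φ) ≤ |c| * feret X φ := by
    unfold feret hF
    rcases le_or_gt 0 c with h | h
    · rw [abs_of_nonneg h, mul_add]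
      exact add_le_add (fS_smul_le hne hcomp h _) (fS_smul_le hXne hXc h _)
    · rw [abs_of_neg h, mul_add]
      have hcd : c • dir φ = (-c) • (-(dir φ)) := by
        rw [smul_neg, neg_smul, neg_neg]
      have hnc : (0:ℝ) ≤ -c := by linarith
      have e1 : fS X (c • dir φ) ≤ (-c) * fS (-X) (dir φ) := by
        rw [hcd]
        calc fS X ((-c) • (-(dir φ))) ≤ (-c) * fS X (-(dir φ)) :=
              fS_smul_le hne hcomp hnc _
          _ ≤ (-c) * fS (-X) (dir φ) :=
              mul_le_mul_of_nonneg_left (fS_neg_le hne hcomp _) hnc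
      have e2 : fS (-X) (c • dir φ) ≤ (-c) * fS X (dir φ) := by
        rw [hcd]
        calc fS (-X) ((-c) • (-(dir φ))) ≤ (-c) * fS (-X) (-(dir φ)) :=
              fS_smul_le hXne hXc hnc _
          _ ≤ (-c) * fS (-(-X)) (dir φ) :=
              mul_le_mul_of_nonneg_left (fS_neg_le hXne hXc _) hnc
          _ = (-c) * fS X (dir φ) := by rw [neg_neg]
      linarith
  rw [habs]
  unfold feret hF at *
  linarith
end

section
/- For N > 1, the N × N matrix F^{(N)} with entries F_{ij} = |sin(θ_i − θ_j)|, where θ_i = (i−1)π/N, is invertible. -/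
open Real Pointwise MeasureTheory

noncomputable def eN (N : ℕ) (a : ℤ) : ℂ := Complex.exp (a * (Real.pi * Complex.I / N))

lemma eN_ne_zero (N : ℕ) (a : ℤ) : eN N a ≠ 0 := Complex.exp_ne_zero _

lemma eN_add (N : ℕ) (a b : ℤ) : eN N (a + b) = eN N a * eN N b := by
  rw [eN, eN, eN, ← Complex.exp_add]; congr 1; push_cast; ring

lemma eN_pow (N : ℕ) (a : ℤ) (l : ℕ) : eN N (l * a) = eN N a ^ l := by
  rw [eN, eN, ← Complex.exp_nat_mul]; congr 1; push_cast; ring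

lemma eN_pow_N (N : ℕ) (hN : 0 < N) (a : ℤ) (ha : Odd a) : eN N a ^ N = -1 := by
  have hN' : (N : ℂ) ≠ 0 := Nat.cast_ne_zero.mpr hN.ne'
  rw [← eN_pow, eN]
  have h : ((N : ℤ) * a : ℤ) * ((Real.pi : ℂ) * Complex.I / N) = a * (Real.pi * Complex.I) := by
    push_cast; field_simp
  rw [h, Complex.exp_int_mul, Complex.exp_pi_mul_I, Odd.neg_one_zpow ha]

lemma eN_ne_one (N : ℕ) (hN : 0 < N) (a : ℤ) (ha : Odd a) : eN N a ≠ 1 := by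
  intro h
  have h2 := eN_pow_N N hN a ha
  rw [h, one_pow] at h2
  norm_num at h2

lemma eN_dvd_of_eq_one (N : ℕ) (hN : 0 < N) (a : ℤ) (h : eN N a = 1) : (2 * N : ℤ) ∣ a := by
  rw [eN, Complex.exp_eq_one_iff] at h
  obtain ⟨n, hn⟩ := h
  have hπ : (Real.pi : ℂ) ≠ 0 := Complex.ofReal_ne_zero.mpr Real.pi_ne_zero
  have hN' : (N : ℂ) ≠ 0 := Nat.cast_ne_zero.mpr hN.ne'
  have hI := Complex.I_ne_zero
  have ha : (a : ℂ) = 2 * N * n := by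
    field_simp at hn
    have h2 : (a : ℂ) * ((Real.pi : ℂ) * Complex.I) = (2 * N * n) * ((Real.pi : ℂ) * Complex.I) := by
      linear_combination hn * ((Real.pi : ℂ) * Complex.I)
    exact mul_right_cancel₀ (mul_ne_zero hπ hI) h2
  refine ⟨n, ?_⟩
  exact_mod_cast ha

lemma sum_eN (N : ℕ) (hN : 0 < N) (a : ℤ) (ha : Odd a) :
    ∑ l : Fin N, eN N (l * a) = -2 / (eN N a - 1) := by
  have h1 : ∀ l : Fin N, eN N (l * a) = eN N a ^ (l : ℕ) := fun l => eN_pow N a l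
  calc ∑ l : Fin N, eN N (l * a) = ∑ l : Fin N, eN N a ^ (l : ℕ) :=
        Finset.sum_congr rfl fun l _ => h1 l
    _ = ∑ l ∈ Finset.range N, eN N a ^ l := Fin.sum_univ_eq_sum_range _ N
    _ = (eN N a ^ N - 1) / (eN N a - 1) := geom_sum_eq (eN_ne_one N hN a ha) N
    _ = -2 / (eN N a - 1) := by rw [eN_pow_N N hN a ha]; norm_num

lemma sin_eq (N : ℕ) (n : ℕ) :
    ((Real.sin ((n : ℝ) * Real.pi / N) : ℝ) : ℂ) = (eN N (-(n : ℤ)) - eN N n) * Complex.I / 2 := by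
  rw [Complex.ofReal_sin, Complex.sin, eN, eN]
  congr 3 <;> push_cast <;> ring

noncomputable def lamF (N : ℕ) (m : ℤ) : ℂ :=
  ∑ l : Fin N, ((Real.sin ((l : ℝ) * Real.pi / N) : ℝ) : ℂ) * eN N (-2 * l * m)

lemma lamF_eq (N : ℕ) (hN : 0 < N) (m : ℤ) :
    lamF N m = Complex.I * (1 / (eN N (1 - 2 * m) - 1) - 1 / (eN N (-1 - 2 * m) - 1)) := by
  have ha1 : Odd (-1 - 2 * m) := ⟨-1 - m, by ring⟩
  have ha2 : Odd (1 - 2 * m) := ⟨-m, by ring⟩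
  calc lamF N m
      = ∑ l : Fin N, (Complex.I / 2 * eN N ((l : ℤ) * (-1 - 2 * m))
          - Complex.I / 2 * eN N ((l : ℤ) * (1 - 2 * m))) := by
        refine Finset.sum_congr rfl fun l _ => ?_
        rw [sin_eq N (l : ℕ)]
        have e1 : eN N (-(l : ℤ)) * eN N (-2 * l * m) = eN N ((l : ℤ) * (-1 - 2 * m)) := by
          rw [← eN_add]; congr 1; ring
        have e2 : eN N (l : ℤ) * eN N (-2 * l * m) = eN N ((l : ℤ) * (1 - 2 * m)) := by
          rw [← eN_add]; congr 1; ring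
        push_cast
        linear_combination (Complex.I / 2) * e1 - (Complex.I / 2) * e2
    _ = Complex.I / 2 * ∑ l : Fin N, eN N ((l : ℤ) * (-1 - 2 * m))
          - Complex.I / 2 * ∑ l : Fin N, eN N ((l : ℤ) * (1 - 2 * m)) := by
        rw [Finset.sum_sub_distrib, ← Finset.mul_sum, ← Finset.mul_sum]
    _ = Complex.I / 2 * (-2 / (eN N (-1 - 2 * m) - 1))
          - Complex.I / 2 * (-2 / (eN N (1 - 2 * m) - 1)) := by
        rw [sum_eN N hN _ ha1, sum_eN N hN _ ha2]
    _ = Complex.I * (1 / (eN N (1 - 2 * m) - 1) - 1 / (eN N (-1 - 2 * m) - 1)) := by ring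

lemma lamF_ne_zero (N : ℕ) (hN : 1 < N) (m : ℤ) : lamF N m ≠ 0 := by
  have hN0 : 0 < N := by omega
  rw [lamF_eq N hN0 m]
  have ha1 : Odd (-1 - 2 * m) := ⟨-1 - m, by ring⟩
  have ha2 : Odd (1 - 2 * m) := ⟨-m, by ring⟩
  have hw1 : eN N (-1 - 2 * m) - 1 ≠ 0 := sub_ne_zero.mpr (eN_ne_one N hN0 _ ha1)
  have hw2 : eN N (1 - 2 * m) - 1 ≠ 0 := sub_ne_zero.mpr (eN_ne_one N hN0 _ ha2)
  intro h
  rcases mul_eq_zero.mp h with h | h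
  · exact Complex.I_ne_zero h
  · have heq : eN N (-1 - 2 * m) = eN N (1 - 2 * m) := by
      field_simp at h
      exact sub_eq_zero.mp (by linear_combination h)
    have h2 : eN N (1 - 2 * m) = eN N (-1 - 2 * m) * eN N 2 := by
      rw [← eN_add]; congr 1; ring
    rw [heq] at h2
    have h3 : (1 : ℂ) = eN N 2 :=
      mul_left_cancel₀ (eN_ne_zero N (1 - 2 * m)) (by rw [mul_one]; exact h2)
    have h4 : (2 * N : ℤ) ∣ 2 := eN_dvd_of_eq_one N hN0 2 h3.symm
    have h5 : (2 * N : ℤ) ≤ 2 := Int.le_of_dvd (by norm_num) h4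
    omega

lemma fin_sub_coe (N : ℕ) (i j : Fin N) :
    ∃ q : ℤ, (((i - j : Fin N) : ℕ) : ℤ) = (i : ℤ) - (j : ℤ) + N * q := by
  have h := Fin.coe_sub i j
  have hi := i.isLt
  have hj := j.isLt
  rcases Nat.lt_or_ge (N - (j : ℕ) + (i : ℕ)) N with hc | hc
  · refine ⟨1, ?_⟩
    have := Nat.mod_eq_of_lt hc
    omega
  · refine ⟨0, ?_⟩
    have h1 : N - (j : ℕ) + (i : ℕ) - N < N := by omega
    have h2 := Nat.mod_eq_sub_mod hc
    have h3 := Nat.mod_eq_of_lt h1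
    omega

lemma abs_sin_eq (N : ℕ) (hN : 0 < N) (i j : Fin N) :
    |Real.sin ((i : ℝ) * Real.pi / N - (j : ℝ) * Real.pi / N)|
      = Real.sin (((i - j : Fin N) : ℝ) * Real.pi / N) := by
  obtain ⟨q, hq⟩ := fin_sub_coe N i j
  have hNr : (N : ℝ) ≠ 0 := Nat.cast_ne_zero.mpr hN.ne'
  have harg : ((i - j : Fin N) : ℝ) * Real.pi / N
      = ((i : ℝ) * Real.pi / N - (j : ℝ) * Real.pi / N) + (q : ℝ) * Real.pi := by
    have hr : ((i - j : Fin N) : ℝ) = (i : ℝ) - (j : ℝ) + (N : ℝ) * (q : ℝ) := by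
      exact_mod_cast congrArg (fun z : ℤ => (z : ℝ)) hq
    rw [hr]; field_simp
  have hsin : Real.sin (((i - j : Fin N) : ℝ) * Real.pi / N)
      = (-1 : ℝ) ^ q * Real.sin ((i : ℝ) * Real.pi / N - (j : ℝ) * Real.pi / N) := by
    rw [harg, Real.sin_add_int_mul_pi]
  have hnonneg : 0 ≤ Real.sin (((i - j : Fin N) : ℝ) * Real.pi / N) := by
    apply Real.sin_nonneg_of_nonneg_of_le_pi
    · positivity
    · have hd : ((i - j : Fin N) : ℕ) < N := (i - j).isLt
      have : ((i - j : Fin N) : ℝ) ≤ (N : ℝ) := by exact_mod_cast hd.le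
      rw [div_le_iff₀ (by positivity : (0:ℝ) < (N:ℝ))] at *
      nlinarith [Real.pi_pos]
  calc |Real.sin ((i : ℝ) * Real.pi / N - (j : ℝ) * Real.pi / N)|
      = |(-1 : ℝ) ^ q * Real.sin ((i : ℝ) * Real.pi / N - (j : ℝ) * Real.pi / N)| := by
        have hone : |(-1 : ℝ) ^ q| = 1 := by
          rcases Int.even_or_odd q with h | h
          · rw [h.neg_one_zpow]; norm_num
          · rw [Odd.neg_one_zpow h]; norm_num
        rw [abs_mul, hone, one_mul]
    _ = |Real.sin (((i - j : Fin N) : ℝ) * Real.pi / N)| := by rw [hsin]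
    _ = Real.sin (((i - j : Fin N) : ℝ) * Real.pi / N) := abs_of_nonneg hnonneg

lemma eN_two_N_mul (N : ℕ) (hN : 0 < N) (s : ℤ) : eN N (2 * N * s) = 1 := by
  have hN' : (N : ℂ) ≠ 0 := Nat.cast_ne_zero.mpr hN.ne'
  rw [eN]
  have h : ((2 * (N : ℤ) * s : ℤ) : ℂ) * ((Real.pi : ℂ) * Complex.I / N)
      = s * (2 * Real.pi * Complex.I) := by push_cast; field_simp
  rw [h, Complex.exp_int_mul_two_pi_mul_I]

lemma eN_fin_sub (N : ℕ) (hN : 0 < N) (j l m : Fin N) :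
    eN N (2 * (((j - l : Fin N) : ℕ) : ℤ) * m) = eN N (2 * j * m) * eN N (-2 * l * m) := by
  obtain ⟨q, hq⟩ := fin_sub_coe N j l
  rw [hq]
  have h : 2 * ((j : ℤ) - l + N * q) * m = (2 * j * m + -2 * l * m) + 2 * N * (q * m) := by ring
  rw [h, eN_add, eN_add, eN_two_N_mul N hN (q * m), mul_one]

lemma eN_inj (N : ℕ) (hN : 0 < N) (i j : Fin N) (h : eN N (2 * i) = eN N (2 * j)) : i = j := by
  wlog hle : (j : ℤ) ≤ (i : ℤ) generalizing i j
  · exact (this j i h.symm (by omega)).symm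
  have h2 : eN N (2 * i) = eN N (2 * j) * eN N (2 * ((i : ℤ) - j)) := by
    rw [← eN_add]; congr 1; ring
  rw [h] at h2
  have h3 : eN N (2 * ((i : ℤ) - j)) = 1 :=
    (mul_left_cancel₀ (eN_ne_zero N (2 * j)) (by rw [mul_one]; exact h2)).symm
  obtain ⟨c, hc⟩ := eN_dvd_of_eq_one N hN _ h3
  have hi := i.isLt
  have hj := j.isLt
  have hc' : 2 * ((i : ℤ) - j) = 2 * ((N : ℤ) * c) := by linear_combination hc
  have hik : (i : ℤ) - j = N * c := mul_left_cancel₀ two_ne_zero hc'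
  have : (i : ℤ) - j < N := by omega
  have hc0 : c = 0 := by nlinarith [Int.natCast_pos.mpr hN]
  rw [hc0, mul_zero] at hik
  exact Fin.ext (by omega)

theorem matrixF_invertible (N : ℕ) (hN : 1 < N) :
    IsUnit (Matrix.of fun i j : Fin N =>
      |Real.sin ((i : ℝ) * π / N - (j : ℝ) * π / N)|) := by
  haveI : NeZero N := ⟨by omega⟩
  have hN0 : 0 < N := by omega
  set A : Matrix (Fin N) (Fin N) ℝ := Matrix.of fun i j : Fin N =>
      |Real.sin ((i : ℝ) * π / N - (j : ℝ) * π / N)| with hA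
  rw [Matrix.isUnit_iff_isUnit_det, isUnit_iff_ne_zero]
  set f : ℝ →+* ℂ := Complex.ofRealHom with hf
  set V : Matrix (Fin N) (Fin N) ℂ := Matrix.vandermonde (fun j : Fin N => eN N (2 * j)) with hV
  set D : Matrix (Fin N) (Fin N) ℂ := Matrix.diagonal (fun m : Fin N => lamF N (m : ℕ)) with hD
  have hVapp : ∀ j m : Fin N, V j m = eN N (2 * j * m) := by
    intro j m
    rw [hV, Matrix.vandermonde_apply, ← eN_pow]
    congr 1; push_cast; ring
  have hVdet : V.det ≠ 0 := by
    rw [hV, Matrix.det_vandermonde]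
    rw [Finset.prod_ne_zero_iff]
    intro i _
    rw [Finset.prod_ne_zero_iff]
    intro j hj
    rw [Finset.mem_Ioi] at hj
    refine sub_ne_zero.mpr fun h => ?_
    exact absurd (eN_inj N hN0 j i h) (Fin.ne_of_gt hj)
  have key : f.mapMatrix A * V = V * D := by
    ext j m
    rw [Matrix.mul_apply, hD, Matrix.mul_diagonal, hVapp j m]
    calc ∑ k, (f.mapMatrix A) j k * V k m
        = ∑ k : Fin N, ((Real.sin (((j - k : Fin N) : ℝ) * π / N) : ℝ) : ℂ)
            * eN N (2 * k * m) := by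
          refine Finset.sum_congr rfl fun k _ => ?_
          rw [RingHom.mapMatrix_apply, Matrix.map_apply, hVapp k m]
          congr 1
          rw [hA]
          exact congrArg Complex.ofReal (abs_sin_eq N hN0 j k)
      _ = ∑ l : Fin N, ((Real.sin (((j - (j - l) : Fin N) : ℝ) * π / N) : ℝ) : ℂ)
            * eN N (2 * ((j - l : Fin N) : ℕ) * m) :=
          (Equiv.sum_comp (Equiv.subLeft j) (fun k : Fin N =>
            ((Real.sin (((j - k : Fin N) : ℝ) * π / N) : ℝ) : ℂ)
              * eN N (2 * (k : ℕ) * m))).symm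
      _ = ∑ l : Fin N, ((Real.sin ((l : ℝ) * π / N) : ℝ) : ℂ)
            * (eN N (2 * j * m) * eN N (-2 * l * m)) := by
          refine Finset.sum_congr rfl fun l _ => ?_
          rw [sub_sub_cancel, eN_fin_sub N hN0 j l m]
      _ = eN N (2 * j * m) * lamF N (m : ℕ) := by
          rw [lamF, Finset.mul_sum]
          exact Finset.sum_congr rfl fun l _ => by ring
  have hDdet : D.det = ∏ m : Fin N, lamF N (m : ℕ) := Matrix.det_diagonal
  have hDne : D.det ≠ 0 := by
    rw [hDdet, Finset.prod_ne_zero_iff]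
    exact fun m _ => lamF_ne_zero N hN _
  have hdet_eq : (f.mapMatrix A).det * V.det = V.det * D.det := by
    rw [← Matrix.det_mul, key, Matrix.det_mul]
  have hAdet : (f.mapMatrix A).det = D.det := by
    rw [mul_comm] at hdet_eq
    exact mul_left_cancel₀ hVdet hdet_eq
  intro h0
  have : (f.mapMatrix A).det = 0 := by rw [← RingHom.map_det, h0, map_zero]
  rw [hAdet] at this
  exact hDne this
end

section
/- Let N > 1, let X ⊂ ℝ² be a nonempty compact convex centrally symmetric set (X = −X), and let θ_i = (i−1)π/N. Define X_0^{(N)} = ∩_{i=1}^N {x ∈ ℝ² : |⟨x, (−sin θ_i, cos θ_i)⟩| ≤ ½ H_X(θ_i)}. Then X ⊆ X_0^{(N)} and H_{X_0^{(N)}}(θ_i) = H_X(θ_i) for each i = 1, …, N. -/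
open Real Pointwise MeasureTheory

/-- The `C₀⁽ᴺ⁾`-approximation of `X`, as an intersection of slabs. -/
noncomputable def approx0 (N : ℕ) (X : Set Pt) : Set Pt :=
  ⋂ i : Fin N, {x : Pt | |(inner ℝ x (dir ((i : ℝ) * π / N)) : ℝ)| ≤
    feret X ((i : ℝ) * π / N) / 2}

theorem approx0_superset_and_feret_eq (N : ℕ) (hN : 1 < N) (X : Set Pt)
    (hne : X.Nonempty) (hcomp : IsCompact X) (hconv : Convex ℝ X) (hsym : X = -X) :
    X ⊆ approx0 N X ∧
    ∀ i : Fin N, feret (approx0 N X) ((i : ℝ) * π / N) = feret X ((i : ℝ) * π / N) := by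
  have hbdd : ∀ θ : ℝ, BddAbove ((fun s => (inner ℝ (dir θ) s : ℝ)) '' X) := fun θ =>
    (hcomp.image (Continuous.inner continuous_const continuous_id)).bddAbove
  have hferet : ∀ θ : ℝ, feret X θ = 2 * hF X θ := by
    intro θ; unfold feret; rw [← hsym]; ring
  have hXsub : X ⊆ approx0 N X := by
    intro s hs
    simp only [approx0, Set.mem_iInter, Set.mem_setOf_eq]
    intro i
    set θ := (i : ℝ) * π / N with hθ
    have h1 : (inner ℝ (dir θ) s : ℝ) ≤ hF X θ := le_csSup (hbdd θ) ⟨s, hs, rfl⟩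
    have hns : -s ∈ X := by rw [hsym]; simpa using hs
    have h2 : (inner ℝ (dir θ) (-s) : ℝ) ≤ hF X θ := le_csSup (hbdd θ) ⟨-s, hns, rfl⟩
    rw [inner_neg_right] at h2
    rw [hferet θ, abs_le]
    constructor <;> rw [real_inner_comm] <;> linarith
  refine ⟨hXsub, fun i => ?_⟩
  set θ := (i : ℝ) * π / N with hθ
  have hA_le : ∀ x ∈ approx0 N X, (inner ℝ (dir θ) x : ℝ) ≤ hF X θ := by
    intro x hx
    have := Set.mem_iInter.mp hx i
    simp only [Set.mem_setOf_eq] at this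
    rw [hferet θ] at this
    have := (abs_le.mp this).2
    rw [real_inner_comm] at this
    linarith
  have hAne : ((fun s => (inner ℝ (dir θ) s : ℝ)) '' approx0 N X).Nonempty :=
    (hne.mono hXsub).image _
  have hXne : ((fun s => (inner ℝ (dir θ) s : ℝ)) '' X).Nonempty := hne.image _
  have hAbdd : BddAbove ((fun s => (inner ℝ (dir θ) s : ℝ)) '' approx0 N X) := by
    refine ⟨hF X θ, ?_⟩
    rintro y ⟨x, hx, rfl⟩
    exact hA_le x hx
  have hhF : hF (approx0 N X) θ = hF X θ := by
    apply le_antisymm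
    · apply csSup_le hAne
      rintro y ⟨x, hx, rfl⟩
      exact hA_le x hx
    · exact csSup_le_csSup hAbdd hXne (Set.image_mono hXsub)
  have hAsym : -(approx0 N X) = approx0 N X := by
    ext x
    simp only [Set.mem_neg, approx0, Set.mem_iInter, Set.mem_setOf_eq, inner_neg_left,
      abs_neg]
  rw [feret, hAsym, hhF, hferet θ]
  ring
end

section
/- Let N ≥ 2, X ⊂ ℝ² a nonempty compact convex centrally symmetric set (X = −X), θ_i = (i−1)π/N, and X_0^{(N)} the zonotope in C_0^{(N)} whose Feret diameter agrees with that of X at all θ_i. Then diam(X_0^{(N)}) ≤ (√2/(√2 − 1)) · diam(X), where diam(Y) = sup_θ H_Y(θ). -/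
open Real Pointwise MeasureTheory

lemma inner_mk2 (φ a b : ℝ) : (inner ℝ (dir φ) (mk2 a b) : ℝ) = -Real.sin φ * a + Real.cos φ * b := by
  simp [dir, mk2, PiLp.inner_apply, Fin.sum_univ_two, RCLike.inner_apply, conj_trivial,
    WithLp.equiv_symm_apply, PiLp.toLp_apply, Matrix.cons_val_zero, Matrix.cons_val_one, Matrix.head_cons, mul_comm]

lemma norm_dir (φ : ℝ) : ‖dir φ‖ = 1 := by
  rw [EuclideanSpace.norm_eq]
  simp [dir, mk2, Fin.sum_univ_two, WithLp.equiv_symm_apply, PiLp.toLp_apply]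

-- the linear functional x ↦ a * ⟪u, x⟫ as an affine map
noncomputable def lf (u : Pt) : Pt →ᵃ[ℝ] ℝ :=
  ((innerSL ℝ u).toLinearMap).toAffineMap

lemma image_smul_seg (u : Pt) (a θ : ℝ) :
    (fun s => (inner ℝ u s : ℝ)) '' (a • seg θ) =
      segment ℝ (-(a * (inner ℝ u (mk2 (Real.cos θ / 2) (Real.sin θ / 2)) : ℝ)))
        (a * (inner ℝ u (mk2 (Real.cos θ / 2) (Real.sin θ / 2)) : ℝ)) := by
  rw [seg, ← Set.image_smul, ← Set.image_comp]
  have : ((fun s => (inner ℝ u s : ℝ)) ∘ (fun x : Pt => a • x)) =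
      (AffineMap.comp (lf u) (LinearMap.lsmul ℝ Pt a).toAffineMap) := by
    ext x; simp [lf, real_inner_smul_right, mul_comm]
  rw [this, image_segment]
  congr 1 <;> simp [lf, real_inner_smul_right] <;> ring

lemma inner_dir_pt (θ φ : ℝ) :
    (inner ℝ (dir φ) (mk2 (Real.cos θ / 2) (Real.sin θ / 2)) : ℝ) = Real.sin (θ - φ) / 2 := by
  rw [inner_mk2, Real.sin_sub]; ring

lemma image_smul_seg' (a θ φ : ℝ) :
    (fun s => (inner ℝ (dir φ) s : ℝ)) '' (a • seg θ) =
      Set.uIcc (-(a * Real.sin (θ - φ) / 2)) (a * Real.sin (θ - φ) / 2) := by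
  rw [image_smul_seg, inner_dir_pt, segment_eq_uIcc]
  ring_nf

lemma bddAbove_image_smul_seg (a θ φ : ℝ) :
    BddAbove ((fun s => (inner ℝ (dir φ) s : ℝ)) '' (a • seg θ)) := by
  rw [image_smul_seg']; exact bddAbove_Icc

lemma nonempty_smul_seg (a θ : ℝ) : (a • seg θ).Nonempty :=
  Set.Nonempty.smul_set ⟨_, left_mem_segment ℝ _ _⟩

lemma fS_smul_seg (a θ φ : ℝ) (ha : 0 ≤ a) :
    fS (a • seg θ) (dir φ) = a * |Real.sin (θ - φ)| / 2 := by
  rw [fS, image_smul_seg', Set.uIcc, csSup_Icc (min_le_max)]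
  rw [show -(a * Real.sin (θ - φ) / 2) ⊔ a * Real.sin (θ - φ) / 2
      = |a * Real.sin (θ - φ) / 2| by rw [abs_eq_max_neg, max_comm]]
  rw [abs_div, abs_mul, abs_of_nonneg ha]
  norm_num

lemma image_inner_add (u : Pt) (A B : Set Pt) :
    (fun x => (inner ℝ u x : ℝ)) '' (A + B)
      = (fun x => (inner ℝ u x : ℝ)) '' A + (fun x => (inner ℝ u x : ℝ)) '' B := by
  ext r
  simp only [Set.mem_image, Set.mem_add]
  constructor
  · rintro ⟨x, ⟨a, ha, b, hb, rfl⟩, rfl⟩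
    exact ⟨_, ⟨a, ha, rfl⟩, _, ⟨b, hb, rfl⟩, (inner_add_right u a b).symm⟩
  · rintro ⟨_, ⟨a, ha, rfl⟩, _, ⟨b, hb, rfl⟩, rfl⟩
    exact ⟨a + b, ⟨a, ha, b, hb, rfl⟩, inner_add_right u a b⟩

lemma fS_sum_general (u : Pt) {ι : Type*} (s : Finset ι) (A : ι → Set Pt)
    (h1 : ∀ i ∈ s, (A i).Nonempty)
    (h2 : ∀ i ∈ s, BddAbove ((fun x => (inner ℝ u x : ℝ)) '' A i)) :
    fS (∑ i ∈ s, A i) u = ∑ i ∈ s, fS (A i) u ∧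
    (∑ i ∈ s, A i).Nonempty ∧ BddAbove ((fun x => (inner ℝ u x : ℝ)) '' (∑ i ∈ s, A i)) := by
  induction s using Finset.cons_induction with
  | empty =>
    refine ⟨?_, ⟨0, rfl⟩, ?_⟩
    · simp only [Finset.sum_empty]
      rw [fS, show ((0 : Set Pt)) = {0} from rfl, Set.image_singleton, inner_zero_right,
        csSup_singleton]
    · simp only [Finset.sum_empty]
      rw [show ((0 : Set Pt)) = {0} from rfl, Set.image_singleton]
      exact bddAbove_singleton
  | cons i s hi ih =>
    obtain ⟨ihf, ihn, ihb⟩ := ih (fun j hj => h1 j (Finset.mem_cons_of_mem hj))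
      (fun j hj => h2 j (Finset.mem_cons_of_mem hj))
    have h1i := h1 i (Finset.mem_cons_self i s)
    have h2i := h2 i (Finset.mem_cons_self i s)
    simp only [Finset.sum_cons]
    have himg := image_inner_add u (A i) (∑ j ∈ s, A j)
    refine ⟨?_, h1i.add ihn, ?_⟩
    · rw [fS, himg, csSup_add (h1i.image _) h2i (ihn.image _) ihb, ← fS, ← fS, ihf]
    · rw [himg]; exact h2i.add ihb

lemma neg_seg (θ : ℝ) : -seg θ = seg θ := by
  have h1 : -seg θ = (fun x : Pt => -x) '' seg θ := by
    ext x; simp only [Set.mem_neg, Set.mem_image]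
    constructor
    · intro h; exact ⟨-x, h, neg_neg x⟩
    · rintro ⟨y, hy, rfl⟩; simpa using hy
  have h2 : (fun x : Pt => -x) = ((-(LinearMap.id : Pt →ₗ[ℝ] Pt)).toAffineMap : Pt →ᵃ[ℝ] Pt) := by
    ext x; simp
  rw [h1, h2, seg, image_segment]
  have e1 : ((-(LinearMap.id : Pt →ₗ[ℝ] Pt)).toAffineMap) (-mk2 (Real.cos θ / 2) (Real.sin θ / 2))
      = mk2 (Real.cos θ / 2) (Real.sin θ / 2) := by simp
  have e2 : ((-(LinearMap.id : Pt →ₗ[ℝ] Pt)).toAffineMap) (mk2 (Real.cos θ / 2) (Real.sin θ / 2))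
      = -mk2 (Real.cos θ / 2) (Real.sin θ / 2) := by simp
  rw [e1, e2]
  exact segment_symm ℝ _ _

lemma neg_sum_sets {ι : Type*} (s : Finset ι) (A : ι → Set Pt) :
    -(∑ i ∈ s, A i) = ∑ i ∈ s, -(A i) := by
  induction s using Finset.cons_induction with
  | empty => simp
  | cons i s hi ih =>
    simp only [Finset.sum_cons, neg_add_rev, ih]
    exact add_comm _ _

lemma feret_X0 {N : ℕ} (α : Fin N → ℝ) (hα : ∀ i, 0 ≤ α i) (φ : ℝ) :
    feret (∑ i : Fin N, α i • seg ((i : ℝ) * π / N)) φ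
      = ∑ i : Fin N, α i * |Real.sin ((i : ℝ) * π / N - φ)| := by
  have hneg : -(∑ i : Fin N, α i • seg ((i : ℝ) * π / N))
      = ∑ i : Fin N, α i • seg ((i : ℝ) * π / N) := by
    rw [neg_sum_sets]
    exact Finset.sum_congr rfl fun i _ => by rw [← Set.smul_set_neg, neg_seg]
  have key := (fS_sum_general (dir φ) Finset.univ (fun i : Fin N => α i • seg ((i : ℝ) * π / N))
      (fun i _ => nonempty_smul_seg _ _) (fun i _ => bddAbove_image_smul_seg _ _ _)).1
  rw [feret, hF, hF, hneg, key, ← Finset.sum_add_distrib]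
  exact Finset.sum_congr rfl fun i _ => by rw [fS_smul_seg _ _ _ (hα i)]; ring

lemma abs_sin_add_int_mul_pi (x : ℝ) (n : ℤ) : |Real.sin (x + n * π)| = |Real.sin x| := by
  rw [Real.sin_add_int_mul_pi, abs_mul]
  have : |((-1:ℝ)) ^ n| = 1 := by
    rcases Int.even_or_odd n with h | h
    · rw [h.neg_one_zpow]; norm_num
    · rw [Odd.neg_one_zpow h]; norm_num
  rw [this, one_mul]

lemma abs_sin_add_le (x y : ℝ) : |Real.sin (x + y)| ≤ |Real.sin x| + |Real.sin y| := by
  rw [Real.sin_add]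
  calc |Real.sin x * Real.cos y + Real.cos x * Real.sin y|
      ≤ |Real.sin x * Real.cos y| + |Real.cos x * Real.sin y| := abs_add_le _ _
    _ ≤ |Real.sin x| * 1 + 1 * |Real.sin y| := by
        rw [abs_mul, abs_mul]
        gcongr
        · exact Real.abs_cos_le_one y
        · exact Real.abs_cos_le_one x
    _ = |Real.sin x| + |Real.sin y| := by ring

lemma sin_quarter {x : ℝ} (h1 : π / 4 ≤ x) (h2 : x ≤ 3 * π / 4) :
    Real.sqrt 2 / 2 ≤ Real.sin x := by
  have hpi := Real.pi_pos
  rcases le_total x (π / 2) with hx | hx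
  · rw [← Real.sin_pi_div_four]
    exact Real.strictMonoOn_sin.monotoneOn ⟨by linarith, by linarith⟩ ⟨by linarith, hx⟩ h1
  · rw [← Real.sin_pi_sub, ← Real.sin_pi_div_four]
    exact Real.strictMonoOn_sin.monotoneOn ⟨by linarith, by linarith⟩
      ⟨by linarith, by linarith⟩ (by linarith)

lemma exists_close (N : ℕ) (hN : 2 ≤ N) (φ : ℝ) :
    ∃ j : Fin N, |Real.sin ((j : ℝ) * π / N - φ)| ≤ π / (2 * N) := by
  have hpi := Real.pi_pos
  have hNR : (0:ℝ) < N := by exact_mod_cast (by omega : 0 < N)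
  have hN0 : ((N:ℤ)) ≠ 0 := by exact_mod_cast (by omega : N ≠ 0)
  set k : ℤ := round (φ * N / π) with hk
  have h1 : 0 ≤ k % N := Int.emod_nonneg k hN0
  have h2 : k % (N:ℤ) < N := Int.emod_lt_of_pos k (by exact_mod_cast (by omega : 0 < N))
  refine ⟨⟨(k % (N:ℤ)).toNat, by omega⟩, ?_⟩
  have hjv : ((((k % (N:ℤ)).toNat : ℕ)) : ℝ) = ((k % (N:ℤ) : ℤ) : ℝ) := by
    exact_mod_cast Int.toNat_of_nonneg h1
  have hmod : ((k % (N:ℤ) : ℤ) : ℝ) = (k:ℝ) - (N:ℝ) * ((k / (N:ℤ) : ℤ) : ℝ) := by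
    rw [Int.emod_def]; push_cast; ring
  have hang : ((k % (N:ℤ) : ℤ):ℝ) * π / N - φ
      = ((k:ℝ) * π / N - φ) + ((-(k / (N:ℤ)) : ℤ) : ℝ) * π := by
    rw [hmod]; push_cast; field_simp; ring
  have hcoe : ((⟨(k % (N:ℤ)).toNat, by omega⟩ : Fin N) : ℝ) = ((k % (N:ℤ) : ℤ) : ℝ) := by
    simp only [Fin.val_mk]; exact hjv
  rw [hcoe, hang, abs_sin_add_int_mul_pi]
  have heq : (k:ℝ) * π / N - φ = ((k:ℝ) - φ * N / π) * (π / N) := by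
    field_simp
  calc |Real.sin ((k:ℝ) * π / N - φ)| ≤ |(k:ℝ) * π / N - φ| := Real.abs_sin_le_abs
    _ = |(k:ℝ) - φ * N / π| * (π / N) := by
        rw [heq, abs_mul, abs_of_pos (show (0:ℝ) < π / (N:ℝ) by positivity)]
    _ ≤ (1/2) * (π / N) := by
        apply mul_le_mul_of_nonneg_right _ (by positivity)
        rw [abs_sub_comm]
        exact abs_sub_round (φ * N / π)
    _ = π / (2 * N) := by ring

lemma exists_far (N : ℕ) (hN : 2 ≤ N) (i : Fin N) :
    ∃ j : Fin N, Real.sqrt 2 / 2 ≤ |Real.sin ((i : ℝ) * π / N - (j : ℝ) * π / N)| := by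
  have hpi := Real.pi_pos
  have hNR : (0:ℝ) < N := by exact_mod_cast (by omega : 0 < N)
  have hN0 : ((N:ℤ)) ≠ 0 := by exact_mod_cast (by omega : N ≠ 0)
  set m : ℕ := (N + 3) / 4 with hm
  have hm1 : (N:ℝ) ≤ 4 * m := by exact_mod_cast (by omega : N ≤ 4 * ((N+3)/4))
  have hm2 : (4 * m : ℝ) ≤ 3 * N := by exact_mod_cast (by omega : 4 * ((N+3)/4) ≤ 3 * N)
  have hθ1 : π / 4 ≤ (m:ℝ) * π / N := by
    rw [div_le_div_iff₀ (by norm_num) hNR]; nlinarith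
  have hθ2 : (m:ℝ) * π / N ≤ 3 * π / 4 := by
    rw [div_le_div_iff₀ hNR (by norm_num)]; nlinarith
  have hsin := sin_quarter hθ1 hθ2
  set t : ℤ := (i : ℤ) - m with ht
  have h1 : 0 ≤ t % N := Int.emod_nonneg t hN0
  have h2 : t % (N:ℤ) < N := Int.emod_lt_of_pos t (by exact_mod_cast (by omega : 0 < N))
  refine ⟨⟨(t % (N:ℤ)).toNat, by omega⟩, ?_⟩
  have hcoe : ((⟨(t % (N:ℤ)).toNat, by omega⟩ : Fin N) : ℝ) = ((t % (N:ℤ) : ℤ) : ℝ) := by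
    simp only [Fin.val_mk]; exact_mod_cast Int.toNat_of_nonneg h1
  have hmod : ((t % (N:ℤ) : ℤ) : ℝ) = (t:ℝ) - (N:ℝ) * ((t / (N:ℤ) : ℤ) : ℝ) := by
    rw [Int.emod_def]; push_cast; ring
  have hang : (i : ℝ) * π / N - ((t % (N:ℤ) : ℤ):ℝ) * π / N
      = (m:ℝ) * π / N + ((t / (N:ℤ) : ℤ) : ℝ) * π := by
    rw [hmod, ht]; push_cast; field_simp; ring
  rw [hcoe, hang]
  have : |Real.sin ((m:ℝ) * π / N + ((t / (N:ℤ) : ℤ) : ℝ) * π)| = |Real.sin ((m:ℝ) * π / N)| :=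
    abs_sin_add_int_mul_pi _ _
  rw [this]
  exact le_trans hsin (le_abs_self _)

theorem diam_approx0_le (N : ℕ) (hN : 2 ≤ N) (X : Set Pt)
    (hne : X.Nonempty) (hcomp : IsCompact X) (hconv : Convex ℝ X) (hsym : X = -X)
    (α : Fin N → ℝ) (hα : ∀ i, 0 ≤ α i) (X0 : Set Pt)
    (hX0 : X0 = ∑ i : Fin N, α i • seg ((i : ℝ) * π / N))
    (hferet : ∀ i : Fin N, feret X0 ((i : ℝ) * π / N) = feret X ((i : ℝ) * π / N)) :
    (⨆ θ : ℝ, feret X0 θ) ≤ (Real.sqrt 2 / (Real.sqrt 2 - 1)) * ⨆ θ : ℝ, feret X θ := by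
  have hpi := Real.pi_pos
  have hNR : (0:ℝ) < N := by exact_mod_cast (by omega : 0 < N)
  set s2 := Real.sqrt 2 with hs2def
  have hs2 : s2 ^ 2 = 2 := Real.sq_sqrt (by norm_num)
  have hs2pos : 0 < s2 := Real.sqrt_pos.mpr (by norm_num)
  have hs2lt : s2 ≤ 1.5 := by nlinarith
  have hs2gt : 1.4 ≤ s2 := by nlinarith
  -- the formula for feret X0
  have hform : ∀ φ : ℝ, feret X0 φ = ∑ i : Fin N, α i * |Real.sin ((i : ℝ) * π / N - φ)| := by
    intro φ; rw [hX0]; exact feret_X0 α hα φ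
  -- bddAbove of range (feret X)
  obtain ⟨R, hR⟩ := hcomp.isBounded.subset_closedBall 0
  have hhF : ∀ θ : ℝ, hF X θ ≤ R := by
    intro θ
    apply csSup_le (hne.image _)
    rintro r ⟨s, hs, rfl⟩
    calc (inner ℝ (dir θ) s : ℝ) ≤ ‖dir θ‖ * ‖s‖ := real_inner_le_norm _ _
      _ = ‖s‖ := by rw [norm_dir, one_mul]
      _ ≤ R := by simpa using hR hs
  have hbdd : BddAbove (Set.range (feret X)) := by
    refine ⟨R + R, ?_⟩
    rintro _ ⟨θ, rfl⟩
    rw [feret, ← hsym]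
    exact add_le_add (hhF θ) (hhF θ)
  set D := ⨆ θ : ℝ, feret X θ with hD
  have hDle : ∀ i : Fin N, feret X ((i : ℝ) * π / N) ≤ D := fun i => le_ciSup hbdd _
  have i0 : Fin N := ⟨0, by omega⟩
  have hD0 : 0 ≤ D := by
    refine le_trans ?_ (hDle i0)
    rw [← hferet i0, hform]
    exact Finset.sum_nonneg fun i _ => mul_nonneg (hα i) (abs_nonneg _)
  -- each α i ≤ √2 * D
  have hα_le : ∀ i : Fin N, α i ≤ s2 * D := by
    intro i
    obtain ⟨j, hj⟩ := exists_far N hN i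
    have h1 : α i * (s2 / 2) ≤ ∑ k : Fin N, α k * |Real.sin ((k : ℝ) * π / N - (j : ℝ) * π / N)| := by
      refine le_trans (mul_le_mul_of_nonneg_left hj (hα i)) ?_
      exact Finset.single_le_sum (f := fun k : Fin N => α k * |Real.sin ((k : ℝ) * π / N - (j : ℝ) * π / N)|)
        (fun k _ => mul_nonneg (hα k) (abs_nonneg _)) (Finset.mem_univ i)
    have h2 : α i * (s2 / 2) ≤ D := by
      refine le_trans h1 ?_
      rw [← hform, hferet j]
      exact hDle j
    nlinarith [mul_le_mul_of_nonneg_left h2 hs2pos.le]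
  -- main bound
  apply ciSup_le
  intro φ
  obtain ⟨j, hj⟩ := exists_close N hN φ
  have step1 : feret X0 φ ≤ (∑ i : Fin N, α i * |Real.sin ((i : ℝ) * π / N - (j : ℝ) * π / N)|)
      + (∑ i : Fin N, α i) * |Real.sin ((j : ℝ) * π / N - φ)| := by
    rw [hform, Finset.sum_mul, ← Finset.sum_add_distrib]
    refine Finset.sum_le_sum fun i _ => ?_
    rw [← mul_add]
    refine mul_le_mul_of_nonneg_left ?_ (hα i)
    have := abs_sin_add_le ((i : ℝ) * π / N - (j : ℝ) * π / N) ((j : ℝ) * π / N - φ)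
    rwa [sub_add_sub_cancel] at this
  have hsum_le : (∑ i : Fin N, α i) ≤ N * (s2 * D) := by
    calc (∑ i : Fin N, α i) ≤ ∑ _i : Fin N, s2 * D := Finset.sum_le_sum fun i _ => hα_le i
      _ = N * (s2 * D) := by rw [Finset.sum_const, Finset.card_univ, Fintype.card_fin]; simp [nsmul_eq_mul]
  have step2 : feret X0 φ ≤ D + (N * (s2 * D)) * (π / (2 * N)) := by
    refine le_trans step1 (add_le_add ?_ ?_)
    · rw [← hform, hferet j]; exact hDle j
    · exact mul_le_mul hsum_le hj (abs_nonneg _)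
        (by positivity)
  have heq : D + (N * (s2 * D)) * (π / (2 * N)) = D * (1 + s2 * π / 2) := by
    field_simp
  rw [heq] at step2
  refine le_trans step2 ?_
  have hdiv : s2 / (s2 - 1) = 2 + s2 := by
    rw [div_eq_iff (by nlinarith)]; nlinarith
  rw [hdiv]
  have hfinal : 1 + s2 * π / 2 ≤ 2 + s2 := by nlinarith [Real.pi_lt_d2]
  calc D * (1 + s2 * π / 2) ≤ D * (2 + s2) := mul_le_mul_of_nonneg_left hfinal hD0
    _ = (2 + s2) * D := mul_comm _ _
end

section
/- The function k_S(t) = (1/π) ∫_0^π |sin(t + z) sin(z)| dz is π-periodic and for t ∈ [0, π] equals k_S(t) = (1/(2π)) (2 sin³(t) + cos(t)(π − 2t + sin(2t))). -/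
open Real Pointwise MeasureTheory

/-- `k_S(t) = (1/π) ∫₀^π |sin(t+z) sin z| dz`. -/
noncomputable def kS (t : ℝ) : ℝ :=
  (1 / π) * ∫ z in (0:ℝ)..π, |Real.sin (t + z) * Real.sin z|

lemma antider (t z : ℝ) :
    HasDerivAt (fun z => z * Real.cos t / 2 - Real.sin (t + 2*z) / 4)
      (Real.sin (t+z) * Real.sin z) z := by
  have h1 : HasDerivAt (fun z : ℝ => z * Real.cos t / 2) (Real.cos t / 2) z := by
    simpa using ((hasDerivAt_id z).mul_const (Real.cos t)).div_const 2
  have h2 : HasDerivAt (fun z : ℝ => Real.sin (t + 2*z) / 4)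
      (Real.cos (t+2*z) * 2 / 4) z := by
    have hl : HasDerivAt (fun z : ℝ => t + 2*z) 2 z := by
      simpa using ((hasDerivAt_id z).const_mul 2).const_add t
    simpa using ((Real.hasDerivAt_sin _).comp z hl).div_const 4
  have h := h1.sub h2
  refine h.congr_deriv ?_
  have A := Real.cos_sub (t+z) z
  have B := Real.cos_add (t+z) z
  have e3 : t + z - z = t := by ring
  rw [e3] at A
  have e2 : t + 2*z = (t+z) + z := by ring
  rw [e2, B, A]
  ring

lemma sin_mul_integral (t a b : ℝ) :
    (∫ z in a..b, Real.sin (t+z) * Real.sin z) =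
      (b * Real.cos t / 2 - Real.sin (t + 2*b) / 4) -
      (a * Real.cos t / 2 - Real.sin (t + 2*a) / 4) := by
  refine intervalIntegral.integral_eq_sub_of_hasDerivAt (fun z _ => antider t z) ?_
  exact ((Real.continuous_sin.comp (continuous_const.add continuous_id)).mul
    Real.continuous_sin).intervalIntegrable a b

theorem kS_periodic_and_formula :
    (∀ t : ℝ, kS (t + π) = kS t) ∧
    (∀ t ∈ Set.Icc (0:ℝ) π,
      kS t = (1 / (2 * π)) *
        (2 * Real.sin t ^ 3 + Real.cos t * (π - 2 * t + Real.sin (2 * t)))) := by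
  constructor
  · intro t
    unfold kS
    congr 1
    apply intervalIntegral.integral_congr
    intro z _
    show |Real.sin (t + π + z) * Real.sin z| = |Real.sin (t + z) * Real.sin z|
    rw [show t + π + z = (t + z) + π by ring, Real.sin_add_pi, neg_mul, abs_neg]
  · intro t ht
    obtain ⟨ht0, htπ⟩ := ht
    set c := π - t with hc
    have hc0 : 0 ≤ c := by linarith
    have hcπ : c ≤ π := by linarith
    have hcont : Continuous fun z : ℝ => |Real.sin (t + z) * Real.sin z| := by continuity
    have hsplit : (∫ z in (0:ℝ)..π, |Real.sin (t + z) * Real.sin z|) =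
        (∫ z in (0:ℝ)..c, |Real.sin (t + z) * Real.sin z|) +
        ∫ z in c..π, |Real.sin (t + z) * Real.sin z| :=
      (intervalIntegral.integral_add_adjacent_intervals
        (hcont.intervalIntegrable _ _) (hcont.intervalIntegrable _ _)).symm
    have h1 : (∫ z in (0:ℝ)..c, |Real.sin (t + z) * Real.sin z|) =
        ∫ z in (0:ℝ)..c, Real.sin (t + z) * Real.sin z := by
      apply intervalIntegral.integral_congr
      intro z hz
      rw [Set.uIcc_of_le hc0] at hz
      obtain ⟨hz0, hzc⟩ := hz
      have hs1 : 0 ≤ Real.sin (t + z) :=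
        Real.sin_nonneg_of_nonneg_of_le_pi (by linarith) (by linarith)
      have hs2 : 0 ≤ Real.sin z :=
        Real.sin_nonneg_of_nonneg_of_le_pi hz0 (by linarith)
      simp [abs_of_nonneg (mul_nonneg hs1 hs2)]
    have h2 : (∫ z in c..π, |Real.sin (t + z) * Real.sin z|) =
        ∫ z in c..π, -(Real.sin (t + z) * Real.sin z) := by
      apply intervalIntegral.integral_congr
      intro z hz
      rw [Set.uIcc_of_le hcπ] at hz
      obtain ⟨hzc, hzπ⟩ := hz
      have hs1 : Real.sin (t + z) ≤ 0 := by
        have : Real.sin ((t + z) - π) = -Real.sin (t + z) := Real.sin_sub_pi _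
        have hnn : 0 ≤ Real.sin ((t + z) - π) :=
          Real.sin_nonneg_of_nonneg_of_le_pi (by linarith) (by linarith)
        linarith [this ▸ hnn]
      have hs2 : 0 ≤ Real.sin z :=
        Real.sin_nonneg_of_nonneg_of_le_pi (by linarith) hzπ
      simp [abs_of_nonpos (mul_nonpos_of_nonpos_of_nonneg hs1 hs2)]
    rw [kS, hsplit, h1, h2, intervalIntegral.integral_neg, sin_mul_integral,
      sin_mul_integral]
    have e1 : Real.sin (t + 2*c) = -Real.sin t := by
      rw [show t + 2*c = -t + 2*π by rw [hc]; ring]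
      simp [Real.sin_add_two_pi, Real.sin_neg]
    have e2 : Real.sin (t + 2*π) = Real.sin t := Real.sin_add_two_pi t
    rw [e1, e2]
    have hπ : (π:ℝ) ≠ 0 := Real.pi_ne_zero
    have hs2t : Real.sin (2*t) = 2 * Real.sin t * Real.cos t := Real.sin_two_mul t
    have hpy : Real.sin t ^ 2 + Real.cos t ^ 2 = 1 := Real.sin_sq_add_cos_sq t
    have h3 : 2*Real.sin t ^3 + Real.cos t * (π - 2*t + 2*Real.sin t*Real.cos t)
        = 2*Real.sin t + Real.cos t * (π - 2*t) := by
      linear_combination 2*Real.sin t * hpy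
    rw [hc, hs2t, h3]
    field_simp
    ring
end

section
/- For N > 1 and θ_i = (i−1)π/N, the N × N matrix K(0) with entries K_{ij} = k_S(θ_i − θ_j), where k_S(t) = (1/π)∫_0^π |sin(t+z) sin(z)| dz, is symmetric positive definite. -/
open Real Pointwise MeasureTheory

section AuxMatrixKPosDef
open Filter Set Topology Matrix

lemma kink_ne {d : ℝ} (hd : Real.sin d ≠ 0) :
    Tendsto (fun s : ℝ => s⁻¹ * (|Real.sin (d + s)| + |Real.sin (d - s)| - 2 * |Real.sin d|))
      (nhdsWithin 0 (Set.Ioi 0)) (nhds 0) := by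
  set F : ℝ → ℝ := fun s => |Real.sin (d + s)| with hF
  have h2 : HasDerivAt (fun s : ℝ => Real.sin (d + s)) (Real.cos (d + 0) * 1) 0 :=
    (Real.hasDerivAt_sin (d + 0)).comp 0 ((hasDerivAt_id (0:ℝ)).const_add d)
  have h3 : HasDerivAt F ((SignType.sign (Real.sin (d + 0)) : ℝ) * (Real.cos (d + 0) * 1)) 0 :=
    (hasDerivAt_abs (by simpa using hd)).comp 0 h2
  set c : ℝ := (SignType.sign (Real.sin (d + 0)) : ℝ) * (Real.cos (d + 0) * 1) with hc
  have hr : Tendsto (fun t : ℝ => t⁻¹ * (F t - F 0)) (𝓝[>] 0) (𝓝 c) := by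
    simpa using h3.tendsto_slope_zero_right
  have hnegmap : Tendsto (fun s : ℝ => -s) (𝓝[>] (0:ℝ)) (𝓝[<] (0:ℝ)) := by
    simpa using tendsto_neg_nhdsGT (a := (0:ℝ))
  have hl : Tendsto (fun t : ℝ => t⁻¹ * (F (-t) - F 0)) (𝓝[>] 0) (𝓝 (-c)) := by
    have h4 := (h3.tendsto_slope_zero_left.comp hnegmap).neg
    refine h4.congr fun s => ?_
    simp only [Function.comp_def, zero_add, smul_eq_mul, inv_neg]
    ring
  have hsum := hr.add hl
  rw [add_neg_cancel] at hsum
  refine hsum.congr fun s => ?_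
  simp only [hF, add_zero, sub_zero]
  rw [show d - s = d + (-s) by ring]
  ring

lemma kink_eq :
    Tendsto (fun s : ℝ =>
        s⁻¹ * (|Real.sin ((0:ℝ) + s)| + |Real.sin ((0:ℝ) - s)| - 2 * |Real.sin (0:ℝ)|))
      (𝓝[>] 0) (𝓝 2) := by
  have hs : Tendsto (fun t : ℝ => t⁻¹ * Real.sin t) (𝓝[>] (0:ℝ)) (𝓝 1) := by
    simpa using (Real.hasDerivAt_sin 0).tendsto_slope_zero_right
  have h2 := hs.const_mul (2:ℝ)
  rw [mul_one] at h2
  refine Tendsto.congr' ?_ h2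
  filter_upwards [Ioo_mem_nhdsGT_of_mem (show (0:ℝ) ∈ Ico 0 π from ⟨le_refl _, pi_pos⟩)]
    with s hs'
  have hsin : |Real.sin s| = Real.sin s :=
    abs_of_nonneg (Real.sin_nonneg_of_nonneg_of_le_pi hs'.1.le hs'.2.le)
  rw [zero_add, zero_sub, Real.sin_neg, abs_neg, hsin, Real.sin_zero, abs_zero]
  ring

lemma abs_sin_periodic (c : ℝ) : Function.Periodic (fun z => |Real.sin (z - c)|) π := by
  intro z
  simp only [show z + π - c = (z - c) + π by ring, Real.sin_add_pi, abs_neg]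

lemma kS_kernel (a b : ℝ) :
    kS (a - b) = (1 / π) * ∫ z in (0:ℝ)..π, |Real.sin (z - a)| * |Real.sin (z - b)| := by
  unfold kS
  congr 1
  have h1 : (∫ z in (0:ℝ)..π, |Real.sin (a - b + z) * Real.sin z|)
      = ∫ x in (0:ℝ)..π, |Real.sin (x + b - a)| * |Real.sin x| := by
    calc (∫ z in (0:ℝ)..π, |Real.sin (a - b + z) * Real.sin z|)
        = ∫ z in (0:ℝ)..π,
            (fun x => |Real.sin (x + b - a)| * |Real.sin x|) (π - z) := by
          apply intervalIntegral.integral_congr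
          intro z _
          simp only
          rw [abs_mul, show π - z + b - a = π - (z + a - b) by ring, Real.sin_pi_sub,
            Real.sin_pi_sub, show z + a - b = a - b + z by ring]
      _ = ∫ x in (π - π)..(π - 0), |Real.sin (x + b - a)| * |Real.sin x| := by
          rw [intervalIntegral.integral_comp_sub_left
            (fun x => |Real.sin (x + b - a)| * |Real.sin x|) π]
      _ = ∫ x in (0:ℝ)..π, |Real.sin (x + b - a)| * |Real.sin x| := by norm_num
  rw [h1]
  have h2 : (∫ x in (0:ℝ)..π, |Real.sin (x + b - a)| * |Real.sin x|)
      = ∫ x in (0:ℝ)..π, (fun y => |Real.sin (y - a)| * |Real.sin (y - b)|) (x + b) := by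
    apply intervalIntegral.integral_congr
    intro z _
    simp only [show z + b - b = z by ring]
  rw [h2, intervalIntegral.integral_comp_add_right
    (fun y => |Real.sin (y - a)| * |Real.sin (y - b)|) b]
  have hper : Function.Periodic (fun y => |Real.sin (y - a)| * |Real.sin (y - b)|) π :=
    (abs_sin_periodic a).mul (abs_sin_periodic b)
  have := hper.intervalIntegral_add_eq b 0
  simpa [add_comm] using this

lemma quad_eq {N : ℕ} (x : Fin N → ℝ) (θ : Fin N → ℝ) :
    ∑ i, x i * ∑ j, kS (θ i - θ j) * x j
      = (1 / π) * ∫ z in (0:ℝ)..π, (∑ i, x i * |Real.sin (z - θ i)|) ^ 2 := by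
  have hc : ∀ c : ℝ, Continuous fun z : ℝ => |Real.sin (z - c)| :=
    fun c => (Real.continuous_sin.comp (continuous_id.sub continuous_const)).abs
  have hint : ∀ i j : Fin N, IntervalIntegrable
      (fun z => x i * x j * (|Real.sin (z - θ i)| * |Real.sin (z - θ j)|)) volume 0 π :=
    fun i j => (Continuous.intervalIntegrable
      (continuous_const.mul ((hc (θ i)).mul (hc (θ j)))) 0 π)
  calc ∑ i, x i * ∑ j, kS (θ i - θ j) * x j
      = ∑ i, ∑ j, (1 / π) * ∫ z in (0:ℝ)..π,
          x i * x j * (|Real.sin (z - θ i)| * |Real.sin (z - θ j)|) := by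
        refine Finset.sum_congr rfl fun i _ => ?_
        rw [Finset.mul_sum]
        refine Finset.sum_congr rfl fun j _ => ?_
        rw [kS_kernel, intervalIntegral.integral_const_mul]
        ring
    _ = (1 / π) * ∑ i, ∑ j, ∫ z in (0:ℝ)..π,
          x i * x j * (|Real.sin (z - θ i)| * |Real.sin (z - θ j)|) := by
        simp only [← Finset.mul_sum]
    _ = (1 / π) * ∑ i, ∫ z in (0:ℝ)..π, ∑ j,
          x i * x j * (|Real.sin (z - θ i)| * |Real.sin (z - θ j)|) := by
        congr 1
        exact Finset.sum_congr rfl fun i _ =>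
          (intervalIntegral.integral_finset_sum (fun j _ => hint i j)).symm
    _ = (1 / π) * ∫ z in (0:ℝ)..π, ∑ i, ∑ j,
          x i * x j * (|Real.sin (z - θ i)| * |Real.sin (z - θ j)|) := by
        congr 1
        exact (intervalIntegral.integral_finset_sum
          (f := fun i z => ∑ j, x i * x j * (|Real.sin (z - θ i)| * |Real.sin (z - θ j)|))
          (fun i _ => Continuous.intervalIntegrable (continuous_finset_sum _
            fun j _ => continuous_const.mul ((hc (θ i)).mul (hc (θ j)))) 0 π)).symm
    _ = (1 / π) * ∫ z in (0:ℝ)..π, (∑ i, x i * |Real.sin (z - θ i)|) ^ 2 := by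
        congr 1
        apply intervalIntegral.integral_congr
        intro z _
        dsimp only
        rw [sq, Finset.sum_mul_sum]
        exact Finset.sum_congr rfl fun i _ => Finset.sum_congr rfl fun j _ => by ring

lemma sin_theta_ne {N : ℕ} (hN : 1 < N) (i j : Fin N) (hij : i ≠ j) :
    Real.sin ((j:ℝ) * π / N - (i:ℝ) * π / N) ≠ 0 := by
  intro h0
  rw [Real.sin_eq_zero_iff] at h0
  obtain ⟨n, hn⟩ := h0
  have hNpos : (0:ℝ) < (N:ℝ) := by exact_mod_cast (by omega : 0 < N)
  have hπ := Real.pi_ne_zero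
  have key : (n:ℝ) * N = (j:ℝ) - (i:ℝ) := by
    have hN0 : (N:ℝ) ≠ 0 := ne_of_gt hNpos
    have h2 : ((n:ℝ) * N) * π = ((j:ℝ) - i) * π := by
      field_simp at hn
      rw [hn]
    exact mul_right_cancel₀ hπ h2
  have hz : (n * N : ℤ) = (j : ℤ) - (i : ℤ) := by exact_mod_cast key
  have hj := j.isLt
  have hi := i.isLt
  have hne : ((j:ℤ) - (i:ℤ)) ≠ 0 := by
    have : (i : ℕ) ≠ (j : ℕ) := fun h => hij (Fin.ext h)
    omega
  rcases lt_trichotomy n 0 with h | h | h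
  · have hle : n * (N:ℤ) ≤ (-1) * N :=
      mul_le_mul_of_nonneg_right (by omega) (by positivity)
    omega
  · subst h; simp at hz; omega
  · have hle : 1 * (N:ℤ) ≤ n * N :=
      mul_le_mul_of_nonneg_right (by omega) (by positivity)
    omega

theorem matrixK_posDef (N : ℕ) (hN : 1 < N) :
    (Matrix.of fun i j : Fin N =>
      kS ((i : ℝ) * π / N - (j : ℝ) * π / N)).PosDef := by
  have hπ : (0:ℝ) < π := Real.pi_pos
  have hsymm : ∀ a b : ℝ, kS (a - b) = kS (b - a) := by
    intro a b
    rw [kS_kernel, kS_kernel]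
    congr 1
    apply intervalIntegral.integral_congr
    intro z _
    dsimp only
    ring
  refine Matrix.PosDef.of_dotProduct_mulVec_pos ?_ ?_
  · ext i j
    simp only [Matrix.conjTranspose_apply, Matrix.of_apply, star_trivial]
    exact hsymm _ _
  · intro x hx
    have hdot : star x ⬝ᵥ ((Matrix.of fun i j : Fin N =>
          kS ((i : ℝ) * π / N - (j : ℝ) * π / N)) *ᵥ x)
        = ∑ i : Fin N, x i * ∑ j : Fin N, kS ((i : ℝ) * π / N - (j : ℝ) * π / N) * x j := by
      simp [dotProduct, Matrix.mulVec, Matrix.of_apply]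
    have key := hdot.trans (quad_eq x fun i : Fin N => (i : ℝ) * π / N)
    rw [key]
    refine mul_pos (by positivity) ?_
    set g : ℝ → ℝ := fun z => ∑ i, x i * |Real.sin (z - (i : ℝ) * π / N)| with hgdef
    have gcont : Continuous g := continuous_finset_sum _ fun i _ =>
      continuous_const.mul ((Real.continuous_sin.comp (continuous_id.sub continuous_const)).abs)
    rw [intervalIntegral.integral_pos_iff_support_of_nonneg_ae
      (Eventually.of_forall fun z => sq_nonneg _) ((gcont.pow 2).intervalIntegrable 0 π)]
    refine ⟨hπ, ?_⟩
    have hex : ∃ z : ℝ, g z ≠ 0 := by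
      by_contra hcon
      push_neg at hcon
      apply hx
      funext j
      show x j = (0:ℝ)
      have hterm : ∀ i : Fin N, Tendsto (fun s : ℝ => s⁻¹ *
          (|Real.sin ((j:ℝ) * π / N + s - (i:ℝ) * π / N)|
            + |Real.sin ((j:ℝ) * π / N - s - (i:ℝ) * π / N)|
            - 2 * |Real.sin ((j:ℝ) * π / N - (i:ℝ) * π / N)|))
          (𝓝[>] 0) (𝓝 (if i = j then 2 else 0)) := by
        intro i
        by_cases hij : i = j
        · rw [if_pos hij]
          subst hij
          refine kink_eq.congr fun s => ?_
          rw [show (i:ℝ) * π / N + s - (i:ℝ) * π / N = (0:ℝ) + s by ring,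
            show (i:ℝ) * π / N - s - (i:ℝ) * π / N = (0:ℝ) - s by ring,
            show (i:ℝ) * π / N - (i:ℝ) * π / N = (0:ℝ) by ring]
        · rw [if_neg hij]
          have hd : Real.sin ((j:ℝ) * π / N - (i:ℝ) * π / N) ≠ 0 := sin_theta_ne hN i j hij
          refine (kink_ne hd).congr fun s => ?_
          rw [show (j:ℝ) * π / N - (i:ℝ) * π / N + s = (j:ℝ) * π / N + s - (i:ℝ) * π / N by ring,
            show (j:ℝ) * π / N - (i:ℝ) * π / N - s = (j:ℝ) * π / N - s - (i:ℝ) * π / N by ring]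
      have htot : Tendsto (fun s : ℝ => ∑ i, x i * (s⁻¹ *
          (|Real.sin ((j:ℝ) * π / N + s - (i:ℝ) * π / N)|
            + |Real.sin ((j:ℝ) * π / N - s - (i:ℝ) * π / N)|
            - 2 * |Real.sin ((j:ℝ) * π / N - (i:ℝ) * π / N)|)))
          (𝓝[>] 0) (𝓝 (∑ i, x i * (if i = j then 2 else 0))) :=
        tendsto_finset_sum _ fun i _ => (hterm i).const_mul (x i)
      have hzero : (fun s : ℝ => ∑ i, x i * (s⁻¹ *
          (|Real.sin ((j:ℝ) * π / N + s - (i:ℝ) * π / N)|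
            + |Real.sin ((j:ℝ) * π / N - s - (i:ℝ) * π / N)|
            - 2 * |Real.sin ((j:ℝ) * π / N - (i:ℝ) * π / N)|))) = fun _ => (0:ℝ) := by
        funext s
        have e : ∀ i : Fin N, x i * (s⁻¹ *
            (|Real.sin ((j:ℝ) * π / N + s - (i:ℝ) * π / N)|
              + |Real.sin ((j:ℝ) * π / N - s - (i:ℝ) * π / N)|
              - 2 * |Real.sin ((j:ℝ) * π / N - (i:ℝ) * π / N)|))
            = s⁻¹ * (x i * |Real.sin ((j:ℝ) * π / N + s - (i:ℝ) * π / N)|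
              + x i * |Real.sin ((j:ℝ) * π / N - s - (i:ℝ) * π / N)|
              - 2 * (x i * |Real.sin ((j:ℝ) * π / N - (i:ℝ) * π / N)|)) := fun i => by ring
        rw [Finset.sum_congr rfl fun i _ => e i, ← Finset.mul_sum]
        have hsplit : ∑ i : Fin N, (x i * |Real.sin ((j:ℝ) * π / N + s - (i:ℝ) * π / N)|
              + x i * |Real.sin ((j:ℝ) * π / N - s - (i:ℝ) * π / N)|
              - 2 * (x i * |Real.sin ((j:ℝ) * π / N - (i:ℝ) * π / N)|))
            = g ((j:ℝ) * π / N + s) + g ((j:ℝ) * π / N - s) - 2 * g ((j:ℝ) * π / N) := by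
          rw [Finset.sum_sub_distrib, Finset.sum_add_distrib, ← Finset.mul_sum]
        rw [hsplit]
        simp [hcon]
      rw [hzero] at htot
      have huniq := tendsto_nhds_unique htot tendsto_const_nhds
      simp only [mul_ite, mul_zero, Finset.sum_ite_eq', Finset.mem_univ, if_true] at huniq
      linarith
    obtain ⟨z₁, hz₁⟩ := hex
    have gper : Function.Periodic g π := by
      intro z
      simp only [hgdef]
      apply Finset.sum_congr rfl
      intro i _
      rw [show z + π - (i:ℝ) * π / N = (z - (i:ℝ) * π / N) + π by ring,
        Real.sin_add_pi, abs_neg]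
    obtain ⟨y, hy, hgy⟩ := gper.exists_mem_Ico₀ hπ z₁
    have hgy' : g y ≠ 0 := fun h => hz₁ (hgy.trans h)
    have hUnb : {z : ℝ | g z ≠ 0} ∈ 𝓝 y :=
      (IsOpen.preimage gcont isOpen_compl_singleton).mem_nhds hgy'
    obtain ⟨l, u, hylu, hsub⟩ := mem_nhds_iff_exists_Ioo_subset.1 hUnb
    have hlt : y < min u π := lt_min hylu.2 hy.2
    refine lt_of_lt_of_le ?_ (measure_mono (?_ : Ioo y (min u π) ⊆ _))
    · rw [Real.volume_Ioo]
      exact ENNReal.ofReal_pos.2 (by linarith)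
    · intro z hz
      constructor
      · have hzU : g z ≠ 0 :=
          hsub ⟨lt_trans hylu.1 hz.1, lt_of_lt_of_le hz.2 (min_le_left _ _)⟩
        exact pow_ne_zero 2 hzU
      · exact ⟨lt_of_le_of_lt hy.1 hz.1, le_trans hz.2.le (min_le_right _ _)⟩

end AuxMatrixKPosDef
end
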